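/- Let p ∈ (0,1), let r > 0, let T > 1 be a real number, set s = (1−p)^{−T} (so s > 1), and define f(β) = (r + β)·(1 − s^{−1/β})/p for β ∈ [1, T]. Suppose there exists β₀ ∈ [1, T] with f′(β₀) = 0. Then for every β₁ with 1 ≤ β₁ < β₀ one has f′(β₁) > 0, and for every β₂ with β₀ < β₂ ≤ T one has f′(β₂) < 0. -/

import Mathlib

open Real Set

noncomputable def aceG (x : ℝ) : ℝ := (Real.exp x - 1 - x) / x ^ 2

lemma ace_h2_pos : ∀ x : ℝ, 0 < x → 0 < (x - 1) * Real.exp x + 1 := by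
  intro x hx
  have h1 : -x + 1 < Real.exp (-x) := Real.add_one_lt_exp (neg_ne_zero.mpr (ne_of_gt hx))
  have h2 : Real.exp (-x) * Real.exp x = 1 := by
    rw [← Real.exp_add]; simp
  nlinarith [Real.exp_pos x, Real.exp_pos (-x)]

lemma ace_h_pos : ∀ x : ℝ, 0 < x → 0 < (x - 2) * Real.exp x + x + 2 := by
  have hmono : StrictMonoOn (fun x : ℝ => (x - 2) * Real.exp x + x + 2) (Ici 0) := by
    apply strictMonoOn_of_deriv_pos (convex_Ici 0)
    · fun_prop
    · intro x hx
      rw [interior_Ici] at hx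
      have hd : HasDerivAt (fun x : ℝ => (x - 2) * Real.exp x + x + 2)
          ((x - 1) * Real.exp x + 1) x := by
        have h1 : HasDerivAt (fun x : ℝ => (x - 2) * Real.exp x)
            (1 * Real.exp x + (x - 2) * Real.exp x) x :=
          ((hasDerivAt_id x).sub_const 2).mul (Real.hasDerivAt_exp x)
        have := (h1.add (hasDerivAt_id x)).add_const 2
        refine this.congr_deriv ?_
        ring
      rw [hd.deriv]
      exact ace_h2_pos x hx
  intro x hx
  have := hmono (self_mem_Ici) (le_of_lt hx) hx
  simpa using this

lemma aceG_strictMono : StrictMonoOn aceG (Ioi 0) := by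
  apply strictMonoOn_of_deriv_pos (convex_Ioi 0)
  · apply ContinuousOn.div
    · fun_prop
    · fun_prop
    · intro x hx
      exact pow_ne_zero 2 (ne_of_gt hx)
  · intro x hx
    rw [interior_Ioi] at hx
    have hd : HasDerivAt aceG
        (((Real.exp x - 1) * x ^ 2 - (Real.exp x - 1 - x) * (2 * x)) / (x ^ 2) ^ 2) x := by
      have hnum : HasDerivAt (fun x : ℝ => Real.exp x - 1 - x) (Real.exp x - 1) x := by
        exact ((Real.hasDerivAt_exp x).sub_const 1).sub (hasDerivAt_id x)
      have hden : HasDerivAt (fun x : ℝ => x ^ 2) ((2 : ℕ) * x ^ (2 - 1)) x := hasDerivAt_pow 2 x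
      have := hnum.div hden (pow_ne_zero 2 (ne_of_gt hx))
      refine this.congr_deriv ?_
      push_cast
      ring
    rw [hd.deriv]
    apply div_pos
    · have hnum : (Real.exp x - 1) * x ^ 2 - (Real.exp x - 1 - x) * (2 * x)
          = x * ((x - 2) * Real.exp x + x + 2) := by ring
      rw [hnum]
      exact mul_pos hx (ace_h_pos x hx)
    · exact pow_pos (pow_pos hx 2) 2

lemma aceS_eq (x r L : ℝ) (hx : x ≠ 0) :
    (Real.exp x - 1 - x) - r / L * x ^ 2 = x ^ 2 * (aceG x - r / L) := by
  rw [aceG, mul_sub, mul_div_cancel₀ _ (pow_ne_zero 2 hx)]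
  ring

/-- For `s = (1-p)^(-T) > 1` and `f β = (r + β)*(1 - s^(-1/β))/p` on `[1, T]`,
if `f′ β₀ = 0` for some `β₀ ∈ [1, T]`, then `f′ β₁ > 0` for every `β₁` with
`1 ≤ β₁ < β₀` and `f′ β₂ < 0` for every `β₂` with `β₀ < β₂ ≤ T`. -/
theorem ace_deriv_sign (p r T s : ℝ) (hp0 : 0 < p) (hp1 : p < 1)
    (hr : 0 < r) (hT : 1 < T) (hs : s = (1 - p) ^ (-T))
    (f : ℝ → ℝ) (hf : ∀ β, f β = (r + β) * (1 - s ^ (-1 / β)) / p)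
    (β₀ : ℝ) (hβ₀ : β₀ ∈ Set.Icc (1 : ℝ) T) (hcrit : deriv f β₀ = 0) :
    (∀ β₁ : ℝ, 1 ≤ β₁ → β₁ < β₀ → 0 < deriv f β₁) ∧
    (∀ β₂ : ℝ, β₀ < β₂ → β₂ ≤ T → deriv f β₂ < 0) := by
  have hq : 0 < 1 - p := by linarith
  have hspos : 0 < s := hs ▸ Real.rpow_pos_of_pos hq _
  set L : ℝ := Real.log s with hLdef
  have hlogq : Real.log (1 - p) < 0 := Real.log_neg hq (by linarith)
  have hL : 0 < L := by
    rw [hLdef, hs, Real.log_rpow hq]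
    nlinarith
  have hfe : ∀ β : ℝ, f β = (r + β) * (1 - Real.exp (L * (-1 / β))) / p := by
    intro β
    rw [hf, Real.rpow_def_of_pos hspos]
  -- derivative formula
  have hD : ∀ β : ℝ, 0 < β → deriv f β =
      Real.exp (L * (-1 / β)) / p *
        ((Real.exp (L / β) - 1 - L / β) - r / L * (L / β) ^ 2) := by
    intro β hβ
    have hβ0 : β ≠ 0 := ne_of_gt hβ
    have h1 : HasDerivAt (fun b : ℝ => -1 / b) (1 / β ^ 2) β := by
      have := (hasDerivAt_inv hβ0).neg
      rw [show (fun b : ℝ => -1 / b) = -fun y => y⁻¹ by funext b; simp [neg_div]]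
      exact this.congr_deriv (by simp [one_div])
    have h2 : HasDerivAt (fun b : ℝ => L * (-1 / b)) (L * (1 / β ^ 2)) β := h1.const_mul L
    have h3 : HasDerivAt (fun b : ℝ => Real.exp (L * (-1 / b)))
        (Real.exp (L * (-1 / β)) * (L * (1 / β ^ 2))) β := h2.exp
    have h4 : HasDerivAt (fun b : ℝ => 1 - Real.exp (L * (-1 / b)))
        (-(Real.exp (L * (-1 / β)) * (L * (1 / β ^ 2)))) β := h3.const_sub 1
    have h5 : HasDerivAt (fun b : ℝ => r + b) 1 β := (hasDerivAt_id β).const_add r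
    have h6 : HasDerivAt (fun b : ℝ => (r + b) * (1 - Real.exp (L * (-1 / b))) / p)
        ((1 * (1 - Real.exp (L * (-1 / β))) +
          (r + β) * -(Real.exp (L * (-1 / β)) * (L * (1 / β ^ 2)))) / p) β :=
      (h5.mul h4).div_const p
    have h7 : HasDerivAt f
        ((1 * (1 - Real.exp (L * (-1 / β))) +
          (r + β) * -(Real.exp (L * (-1 / β)) * (L * (1 / β ^ 2)))) / p) β := by
      have : f = fun b : ℝ => (r + b) * (1 - Real.exp (L * (-1 / b))) / p := funext hfe
      rw [this]; exact h6
    rw [h7.deriv]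
    have hE : Real.exp (L * (-1 / β)) = (Real.exp (L / β))⁻¹ := by
      rw [← Real.exp_neg]
      congr 1
      field_simp
    rw [hE]
    have hexp := Real.exp_pos (L / β)
    field_simp
    ring
  have hβ₀1 : (1 : ℝ) ≤ β₀ := hβ₀.1
  have hβ₀pos : 0 < β₀ := by linarith
  have hx₀ : 0 < L / β₀ := div_pos hL hβ₀pos
  have hS0 : (Real.exp (L / β₀) - 1 - L / β₀) - r / L * (L / β₀) ^ 2 = 0 := by
    have h := hD β₀ hβ₀pos
    rw [hcrit] at h
    have hEp : Real.exp (L * (-1 / β₀)) / p ≠ 0 :=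
      div_ne_zero (Real.exp_ne_zero _) (ne_of_gt hp0)
    exact (mul_eq_zero.mp h.symm).resolve_left hEp
  have hG0 : aceG (L / β₀) = r / L := by
    have h := aceS_eq (L / β₀) r L (ne_of_gt hx₀)
    rw [hS0] at h
    have h2 := (mul_eq_zero.mp h.symm).resolve_left (pow_ne_zero 2 (ne_of_gt hx₀))
    linarith [sub_eq_zero.mp h2]
  constructor
  · intro β₁ h1 h12
    have hβ₁pos : 0 < β₁ := by linarith
    have hx₁ : 0 < L / β₁ := div_pos hL hβ₁pos
    have hxlt : L / β₀ < L / β₁ := div_lt_div_of_pos_left hL hβ₁pos h12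
    have hGlt : r / L < aceG (L / β₁) := by
      rw [← hG0]
      exact aceG_strictMono hx₀ hx₁ hxlt
    rw [hD β₁ hβ₁pos, aceS_eq (L / β₁) r L (ne_of_gt hx₁)]
    exact mul_pos (div_pos (Real.exp_pos _) hp0)
      (mul_pos (pow_pos hx₁ 2) (sub_pos.mpr hGlt))
  · intro β₂ h02 h2T
    have hβ₂pos : 0 < β₂ := by linarith
    have hx₂ : 0 < L / β₂ := div_pos hL hβ₂pos
    have hxlt : L / β₂ < L / β₀ := div_lt_div_of_pos_left hL hβ₀pos h02
    have hGlt : aceG (L / β₂) < r / L := by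
      rw [← hG0]
      exact aceG_strictMono hx₂ hx₀ hxlt
    rw [hD β₂ hβ₂pos, aceS_eq (L / β₂) r L (ne_of_gt hx₂)]
    exact mul_neg_of_pos_of_neg (div_pos (Real.exp_pos _) hp0)
      (mul_neg_of_pos_of_neg (pow_pos hx₂ 2) (sub_neg.mpr hGlt))
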